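/- Let A = !![a, b; c, d] be a real 2×2 matrix. Then there exists γ ∈ ℝ such that M_γ⁻¹ · A · M_γ = !![m_R + p, −m_T; m_T, m_R − p], where M_γ is the rotation matrix by angle γ. (This is the R-centered standard form of A.) -/

import Mathlib

open Real Matrix

theorem stmt_12 (a b c d : ℝ) (A : Matrix (Fin 2) (Fin 2) ℝ) (hA : A = !![a, b; c, d])
    (mR mT p : ℝ) (hmR : mR = (a + d) / 2) (hmT : mT = (c - b) / 2)
    (hp : p = (1 / 2) * Real.sqrt ((a - d) ^ 2 + (b + c) ^ 2)) :
    ∃ γ : ℝ,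
      (!![Real.cos γ, -Real.sin γ; Real.sin γ, Real.cos γ])⁻¹ * A *
          !![Real.cos γ, -Real.sin γ; Real.sin γ, Real.cos γ] =
        !![mR + p, -mT; mT, mR - p] := by
  set s : ℝ := (a - d) / 2 with hs
  set t : ℝ := (b + c) / 2 with ht
  have hpnn : 0 ≤ p := by rw [hp]; positivity
  have hpsq : p ^ 2 = s ^ 2 + t ^ 2 := by
    rw [hp, mul_pow, Real.sq_sqrt (by positivity)]; ring
  -- goal helper: given γ with the double-angle identities, finish
  have key : ∀ γ : ℝ, s = p * (Real.cos γ ^ 2 - Real.sin γ ^ 2) →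
      t = p * (2 * Real.sin γ * Real.cos γ) →
      (!![Real.cos γ, -Real.sin γ; Real.sin γ, Real.cos γ])⁻¹ * A *
          !![Real.cos γ, -Real.sin γ; Real.sin γ, Real.cos γ] =
        !![mR + p, -mT; mT, mR - p] := by
    intro γ h1 h2
    have hpy := Real.sin_sq_add_cos_sq γ
    have hdet : (!![Real.cos γ, -Real.sin γ; Real.sin γ, Real.cos γ]).det = 1 := by
      simp [Matrix.det_fin_two_of]; nlinarith
    have hinv : (!![Real.cos γ, -Real.sin γ; Real.sin γ, Real.cos γ])⁻¹ =
        !![Real.cos γ, Real.sin γ; -Real.sin γ, Real.cos γ] := by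
      rw [Matrix.inv_def, Matrix.adjugate_fin_two, hdet]
      norm_num
    rw [hinv, hA]
    ext i j
    fin_cases i <;> fin_cases j <;>
      simp [Matrix.mul_apply, Fin.sum_univ_succ, hmR, hmT]
    · linear_combination ((a + d)/2 + p*(Real.sin γ^2 + Real.cos γ^2 + 1)) * hpy +
        (Real.cos γ^2 - Real.sin γ^2) * (h1 - hs) + (2*Real.sin γ*Real.cos γ) * (h2 - ht)
    · linear_combination ((b - c)/2) * hpy -
        (2*Real.sin γ*Real.cos γ) * (h1 - hs) + (Real.cos γ^2 - Real.sin γ^2) * (h2 - ht)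
    · linear_combination ((c - b)/2) * hpy -
        (2*Real.sin γ*Real.cos γ) * (h1 - hs) + (Real.cos γ^2 - Real.sin γ^2) * (h2 - ht)
    · linear_combination ((a + d)/2 - p*(Real.sin γ^2 + Real.cos γ^2 + 1)) * hpy -
        (Real.cos γ^2 - Real.sin γ^2) * (h1 - hs) - (2*Real.sin γ*Real.cos γ) * (h2 - ht)
  by_cases hp0 : p = 0
  · refine ⟨0, key 0 ?_ ?_⟩ <;> simp [hp0] <;> nlinarith [sq_nonneg s, sq_nonneg t, hpsq, hp0]
  · set z : ℂ := ⟨s, t⟩ with hz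
    have habs : ‖z‖ = p := by
      rw [Complex.norm_def, Complex.normSq_mk]
      rw [show s * s + t * t = p ^ 2 by nlinarith]
      exact Real.sqrt_sq hpnn
    have hzne : z ≠ 0 := by
      intro h; apply hp0; rw [← habs, h, norm_zero]
    refine ⟨Complex.arg z / 2, key _ ?_ ?_⟩
    · have := Complex.cos_arg hzne
      rw [habs] at this
      have h2 : Real.cos (Complex.arg z) =
          Real.cos (Complex.arg z / 2) ^ 2 - Real.sin (Complex.arg z / 2) ^ 2 := by
        have hc := Real.cos_two_mul (Complex.arg z / 2)
        have hpy := Real.sin_sq_add_cos_sq (Complex.arg z / 2)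
        rw [show 2 * (Complex.arg z / 2) = Complex.arg z by ring] at hc
        linarith
      rw [h2] at this
      field_simp at this
      rw [show z.re = s from rfl] at this
      rw [← this]; ring
    · have := Complex.sin_arg z
      rw [habs] at this
      have h2 : Real.sin (Complex.arg z) =
          2 * Real.sin (Complex.arg z / 2) * Real.cos (Complex.arg z / 2) := by
        rw [← Real.sin_two_mul, show 2 * (Complex.arg z / 2) = Complex.arg z by ring]
      rw [h2] at this
      field_simp at this
      rw [show z.im = t from rfl] at this
      rw [← this]; ring
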